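/- A submonoid τ of a toric monoid σ is a face if and only if there exists a linear functional u on the group completion of σ taking non-negative integer values on σ such that ⟨u,v⟩ = 0 for v ∈ τ and ⟨u,v⟩ > 0 for v ∈ σ \ τ. -/

import Mathlib

open scoped NNReal

namespace Toric

/-- The lattice `ℤ^n`. -/
abbrev L (n : ℕ) := Fin n → ℤ

/-- Inclusion of the lattice into the real vector space. -/
def toReal {n : ℕ} (v : L n) : Fin n → ℝ := fun i => (v i : ℝ)

lemma toReal_zero {n : ℕ} : toReal (0 : L n) = 0 := by
  funext i; simp [toReal]

lemma toReal_add {n : ℕ} (v w : L n) : toReal (v + w) = toReal v + toReal w := by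
  funext i; simp [toReal]

/-- The support of a monoid of lattice points: its non-negative real span,
viewed as a convex cone (an `ℝ≥0`-submodule). -/
noncomputable def supp {n : ℕ} (σ : AddSubmonoid (L n)) : Submodule ℝ≥0 (Fin n → ℝ) :=
  Submodule.span ℝ≥0 (toReal '' (σ : Set (L n)))

/-- A toric monoid: a finitely generated, sharp, saturated submonoid of the
lattice `ℤ^n` (integrality and torsion-freeness are automatic for submonoids
of a lattice). -/
structure IsToric {n : ℕ} (σ : AddSubmonoid (L n)) : Prop where
  fg : σ.FG
  sharp : ∀ v ∈ σ, -v ∈ σ → v = 0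
  saturated : ∀ v ∈ AddSubgroup.closure (σ : Set (L n)), ∀ k : ℕ, 0 < k → k • v ∈ σ → v ∈ σ

/-- `τ` is a face of `σ`: a submonoid such that `v + w ∈ τ` with `v, w ∈ σ`
implies `v, w ∈ τ`. -/
def IsFace {n : ℕ} (τ σ : AddSubmonoid (L n)) : Prop :=
  τ ≤ σ ∧ ∀ v w : L n, v ∈ σ → w ∈ σ → v + w ∈ τ → v ∈ τ ∧ w ∈ τ

/-- A refinement of the monoid `σ`: a collection of submonoids of `σ`, closed
under passing to faces, such that the intersection of any two members is a
face of both, and whose supports cover the support of `σ`. -/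
def IsRefinement {n : ℕ} (R : Set (AddSubmonoid (L n))) (σ : AddSubmonoid (L n)) : Prop :=
  (∀ σ' ∈ R, σ' ≤ σ) ∧
  (∀ σ' ∈ R, ∀ τ, IsFace τ σ' → τ ∈ R) ∧
  (∀ σ₁ ∈ R, ∀ σ₂ ∈ R, IsFace (σ₁ ⊓ σ₂) σ₁ ∧ IsFace (σ₁ ⊓ σ₂) σ₂) ∧
  (⋃ σ' ∈ R, (supp σ' : Set (Fin n → ℝ))) = (supp σ : Set (Fin n → ℝ))

/-- A smooth (toric) monoid: freely generated by finitely many linearly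
independent lattice vectors. -/
def IsSmooth {n : ℕ} (σ : AddSubmonoid (L n)) : Prop :=
  ∃ (k : ℕ) (b : Fin k → L n), LinearIndependent ℤ b ∧
    σ = AddSubmonoid.closure (Set.range b)

end Toric

namespace Toric


open Matrix Finset


lemma farkas {n : ℕ} : ∀ (k : ℕ) (v : Fin k → (Fin n → ℚ)) (y : Fin n → ℚ),
    (¬ ∃ l : Fin k → ℚ, (∀ j, 0 ≤ l j) ∧ ∑ j, l j • v j = y) →
    ∃ u : Fin n → ℚ, (∀ j, 0 ≤ u ⬝ᵥ v j) ∧ u ⬝ᵥ y < 0 := by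
  intro k
  induction k with
  | zero =>
      intro v y h
      have hy : y ≠ 0 := by
        rintro rfl
        exact h ⟨0, fun j => le_refl _, by simp⟩
      refine ⟨-y, fun j => (Fin.elim0 j), ?_⟩
      have hpos : 0 < y ⬝ᵥ y :=
        (Finset.sum_nonneg fun i _ => mul_self_nonneg _).lt_of_ne
          (fun h' => hy (dotProduct_self_eq_zero.mp h'.symm))
      simpa [neg_dotProduct] using neg_neg_iff_pos.2 hpos
  | succ k ih =>
      intro v y h
      have h1 : ¬ ∃ l : Fin k → ℚ, (∀ j, 0 ≤ l j) ∧ ∑ j, l j • v (Fin.castSucc j) = y := by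
        rintro ⟨l, hl, hs⟩
        refine h ⟨fun j => Fin.lastCases 0 l j, ?_, ?_⟩
        · intro j
          refine Fin.lastCases ?_ ?_ j <;> simp [hl]
        · rw [Fin.sum_univ_castSucc]
          simpa using hs
      obtain ⟨u, hu, huy⟩ := ih (fun j => v (Fin.castSucc j)) y h1
      by_cases hlast : 0 ≤ u ⬝ᵥ v (Fin.last k)
      · refine ⟨u, ?_, huy⟩
        intro j
        refine Fin.lastCases hlast hu j
      · push_neg at hlast
        set e := u ⬝ᵥ v (Fin.last k) with he
        have hene : e ≠ 0 := ne_of_lt hlast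
        set w : Fin k → (Fin n → ℚ) :=
          fun j => v (Fin.castSucc j) - (u ⬝ᵥ v (Fin.castSucc j) / e) • v (Fin.last k) with hw
        set y' : Fin n → ℚ := y - (u ⬝ᵥ y / e) • v (Fin.last k) with hy'
        have h2 : ¬ ∃ l : Fin k → ℚ, (∀ j, 0 ≤ l j) ∧ ∑ j, l j • w j = y' := by
          rintro ⟨l, hl, hs⟩
          set c : ℚ := (u ⬝ᵥ y - ∑ j, l j * (u ⬝ᵥ v (Fin.castSucc j))) / e with hc
          have hS : 0 ≤ ∑ j, l j * (u ⬝ᵥ v (Fin.castSucc j)) :=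
            Finset.sum_nonneg fun j _ => mul_nonneg (hl j) (hu j)
          have hcpos : 0 ≤ c := by
            rw [hc]
            apply div_nonneg_iff.2
            right
            constructor <;> [linarith; linarith]
          refine h ⟨fun j => Fin.lastCases c l j, ?_, ?_⟩
          · intro j
            refine Fin.lastCases ?_ ?_ j
            · simpa using hcpos
            · intro i; simpa using hl i
          · rw [Fin.sum_univ_castSucc]
            simp only [Fin.lastCases_castSucc, Fin.lastCases_last]
            have hexp : ∑ j, l j • v (Fin.castSucc j)
                - ((∑ j, l j * (u ⬝ᵥ v (Fin.castSucc j))) / e) • v (Fin.last k)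
                = y - (u ⬝ᵥ y / e) • v (Fin.last k) := by
              have hpt : ∀ j : Fin k, l j • w j
                  = l j • v (Fin.castSucc j)
                    - (l j * (u ⬝ᵥ v (Fin.castSucc j)) / e) • v (Fin.last k) := by
                intro j
                simp only [hw, smul_sub, smul_smul, mul_div_assoc]
              have hws : ∑ j, l j • w j
                  = ∑ j, l j • v (Fin.castSucc j)
                    - ((∑ j, l j * (u ⬝ᵥ v (Fin.castSucc j))) / e) • v (Fin.last k) := by
                rw [Finset.sum_congr rfl (fun j _ => hpt j), Finset.sum_sub_distrib,
                  ← Finset.sum_smul, ← Finset.sum_div]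
              rw [← hws, hs, hy']
            have hsum : ∑ j, l j • v (Fin.castSucc j)
                = y + ((∑ j, l j * (u ⬝ᵥ v (Fin.castSucc j))) / e - u ⬝ᵥ y / e)
                    • v (Fin.last k) := by
              rw [sub_eq_iff_eq_add] at hexp
              rw [hexp, sub_smul]
              abel
            rw [hsum, add_assoc, ← add_smul]
            have hz : (∑ j, l j * (u ⬝ᵥ v (Fin.castSucc j))) / e - u ⬝ᵥ y / e + c = 0 := by
              rw [hc, sub_div]
              ring
            rw [hz, zero_smul, add_zero]
        obtain ⟨u', hu', hu'y⟩ := ih w y' h2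
        refine ⟨u' - (u' ⬝ᵥ v (Fin.last k) / e) • u, ?_, ?_⟩
        · intro j
          refine Fin.lastCases ?_ ?_ j
          · rw [sub_dotProduct, smul_dotProduct]
            rw [← he, smul_eq_mul, div_mul_cancel₀ _ hene]
            simp
          · intro j
            have hj := hu' j
            rw [hw] at hj
            simp only [dotProduct_sub, dotProduct_smul, smul_eq_mul] at hj
            rw [sub_dotProduct, smul_dotProduct, smul_eq_mul]
            calc u' ⬝ᵥ v (Fin.castSucc j) - u' ⬝ᵥ v (Fin.last k) / e * (u ⬝ᵥ v (Fin.castSucc j))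
                = u' ⬝ᵥ v (Fin.castSucc j)
                  - u ⬝ᵥ v (Fin.castSucc j) / e * (u' ⬝ᵥ v (Fin.last k)) := by ring
              _ ≥ 0 := hj
        · rw [sub_dotProduct, smul_dotProduct, smul_eq_mul]
          rw [hy'] at hu'y
          simp only [dotProduct_sub, dotProduct_smul, smul_eq_mul] at hu'y
          calc u' ⬝ᵥ y - u' ⬝ᵥ v (Fin.last k) / e * (u ⬝ᵥ y)
              = u' ⬝ᵥ y - u ⬝ᵥ y / e * (u' ⬝ᵥ v (Fin.last k)) := by ring
            _ < 0 := hu'y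

lemma farkas' {n : ℕ} {ι : Type} [Fintype ι] (v : ι → (Fin n → ℚ)) (y : Fin n → ℚ)
    (h : ¬ ∃ l : ι → ℚ, (∀ j, 0 ≤ l j) ∧ ∑ j, l j • v j = y) :
    ∃ u : Fin n → ℚ, (∀ j, 0 ≤ u ⬝ᵥ v j) ∧ u ⬝ᵥ y < 0 := by
  classical
  set e := Fintype.equivFin ι with he
  have hh : ¬ ∃ l : Fin (Fintype.card ι) → ℚ,
      (∀ j, 0 ≤ l j) ∧ ∑ j, l j • (v ∘ e.symm) j = y := by
    rintro ⟨l, hl, hs⟩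
    refine h ⟨l ∘ e, fun j => hl _, ?_⟩
    rw [← hs]
    exact Fintype.sum_equiv e _ _ (fun j => by simp)
  obtain ⟨u, hu, huy⟩ := farkas _ (v ∘ e.symm) y hh
  exact ⟨u, fun j => by simpa using hu (e j), huy⟩

lemma exists_nat_scale {ι : Type} [Fintype ι] (l : ι → ℚ) (hl : ∀ j, 0 ≤ l j) :
    ∃ N : ℕ, 0 < N ∧ ∀ j, ∃ b : ℕ, (b : ℚ) = (N : ℚ) * l j := by
  classical
  refine ⟨∏ j, (l j).den, Finset.prod_pos fun j _ => (l j).pos, ?_⟩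
  intro j
  obtain ⟨c, hc⟩ : (l j).den ∣ ∏ j, (l j).den := Finset.dvd_prod_of_mem _ (Finset.mem_univ j)
  have hnum : 0 ≤ (l j).num := Rat.num_nonneg.2 (hl j)
  refine ⟨c * (l j).num.toNat, ?_⟩
  have hd : ((l j).den : ℚ) * l j = ((l j).num : ℚ) := by
    rw [mul_comm]
    exact Rat.mul_den_eq_num _
  have h1 : ((∏ i, (l i).den : ℕ) : ℚ) = ((l j).den : ℚ) * (c : ℚ) := by
    exact_mod_cast congrArg (Nat.cast : ℕ → ℚ) hc
  have h2 : ((c * (l j).num.toNat : ℕ) : ℚ) = (c : ℚ) * ((l j).num : ℚ) := by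
    have ht : ((l j).num.toNat : ℚ) = ((l j).num : ℚ) := by
      exact_mod_cast congrArg (Int.cast : ℤ → ℚ) (Int.toNat_of_nonneg hnum)
    push_cast
    rw [ht]
  rw [h2, h1, mul_comm ((l j).den : ℚ) (c : ℚ), mul_assoc, hd]

lemma exists_int_scale {ι : Type} [Fintype ι] (l : ι → ℚ) :
    ∃ N : ℕ, 0 < N ∧ ∀ j, ∃ b : ℤ, (b : ℚ) = (N : ℚ) * l j := by
  classical
  refine ⟨∏ j, (l j).den, Finset.prod_pos fun j _ => (l j).pos, ?_⟩
  intro j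
  obtain ⟨c, hc⟩ : (l j).den ∣ ∏ j, (l j).den := Finset.dvd_prod_of_mem _ (Finset.mem_univ j)
  refine ⟨(c : ℤ) * (l j).num, ?_⟩
  have hd : ((l j).den : ℚ) * l j = ((l j).num : ℚ) := by
    rw [mul_comm]; exact Rat.mul_den_eq_num _
  have h1 : ((∏ i, (l i).den : ℕ) : ℚ) = ((l j).den : ℚ) * (c : ℚ) := by
    exact_mod_cast congrArg (Nat.cast : ℕ → ℚ) hc
  rw [show (((c : ℤ) * (l j).num : ℤ) : ℚ) = (c : ℚ) * ((l j).num : ℚ) from by push_cast; ring,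
    h1, mul_comm ((l j).den : ℚ) (c : ℚ), mul_assoc, hd]

def castVec {n : ℕ} (x : L n) : Fin n → ℚ := fun i => (x i : ℚ)

lemma castVec_injective {n : ℕ} : Function.Injective (castVec (n := n)) := by
  intro x y h
  funext i
  have hi := congrFun h i
  simp only [castVec] at hi
  exact_mod_cast hi

lemma castVec_sum {n : ℕ} {ι : Type} [Fintype ι] (f : ι → L n) :
    castVec (∑ j, f j) = ∑ j, castVec (f j) := by
  funext i
  simp [castVec, Finset.sum_apply]

lemma castVec_zsmul {n : ℕ} (z : ℤ) (x : L n) :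
    castVec (z • x) = (z : ℚ) • castVec x := by
  funext i
  simp [castVec]

lemma castVec_neg {n : ℕ} (x : L n) : castVec (-x) = -castVec x := by
  funext i
  simp [castVec]

lemma sum_dot {n : ℕ} {ι : Type} (s : Finset ι) (f : ι → L n) (x : L n) :
    (∑ j ∈ s, f j) ⬝ᵥ x = ∑ j ∈ s, f j ⬝ᵥ x := by
  simp only [dotProduct, Finset.sum_apply, Finset.sum_mul]
  exact Finset.sum_comm

lemma castVec_dot {n : ℕ} (U x : L n) :
    ((U ⬝ᵥ x : ℤ) : ℚ) = castVec U ⬝ᵥ castVec x := by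
  simp [dotProduct, castVec]

/-- Key existence lemma: an integral supporting functional for a face,
on the level of a finite generating family. -/
lemma exists_int_functional {n m : ℕ} (g : Fin m → L n) (τ : AddSubmonoid (L n))
    (hface : ∀ a : Fin m → ℕ, (∑ i, a i • g i) ∈ τ → ∀ i, 0 < a i → g i ∈ τ) :
    ∃ U : L n, (∀ i, 0 ≤ U ⬝ᵥ g i) ∧ (∀ i, g i ∈ τ → U ⬝ᵥ g i = 0) ∧
      (∀ i, g i ∉ τ → 0 < U ⬝ᵥ g i) := by
  classical
  have step : ∀ i₀ : Fin m, g i₀ ∉ τ → ∃ u : L n,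
      (∀ i, 0 ≤ u ⬝ᵥ g i) ∧ (∀ i, g i ∈ τ → u ⬝ᵥ g i = 0) ∧ 0 < u ⬝ᵥ g i₀ := by
    intro i₀ hi₀
    set TZ : Fin m ⊕ Fin m → L n :=
      Sum.elim g (fun i => if g i ∈ τ then -(g i) else g i) with hTZ
    have hnot : ¬ ∃ l : Fin m ⊕ Fin m → ℚ,
        (∀ j, 0 ≤ l j) ∧ ∑ j, l j • castVec (TZ j) = -castVec (g i₀) := by
      rintro ⟨l, hl, hs⟩
      obtain ⟨N, hN, hb⟩ := exists_nat_scale l hl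
      choose b hbb using hb
      have hZ : ∑ j, (b j : ℤ) • TZ j = (N : ℤ) • (-(g i₀)) := by
        apply castVec_injective
        rw [castVec_sum, castVec_zsmul]
        have h1 : ∀ j, castVec ((b j : ℤ) • TZ j) = ((N : ℚ) * l j) • castVec (TZ j) := by
          intro j
          rw [castVec_zsmul, ← hbb j]
          norm_num
        rw [Finset.sum_congr rfl (fun j _ => h1 j)]
        have h2 : ∑ j, ((N : ℚ) * l j) • castVec (TZ j)
            = (N : ℚ) • ∑ j, l j • castVec (TZ j) := by
          rw [Finset.smul_sum]
          exact Finset.sum_congr rfl (fun j _ => by rw [smul_smul])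
        rw [h2, hs, castVec_neg]
        push_cast
        module
      set a : Fin m → ℕ := fun i =>
        b (Sum.inl i) + (if g i ∈ τ then 0 else b (Sum.inr i)) + (if i = i₀ then N else 0)
        with ha
      set c : Fin m → ℕ := fun i => if g i ∈ τ then b (Sum.inr i) else 0 with hc
      have key : ∑ i, a i • g i = ∑ i, c i • g i := by
        have cast1 : ∀ (d : Fin m → ℕ), ∑ i, d i • g i = ∑ i, (d i : ℤ) • g i :=
          fun d => Finset.sum_congr rfl (fun i _ => (Nat.cast_smul_eq_nsmul ℤ _ _).symm)
        rw [cast1 a, cast1 c]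
        have hgoal : ∑ i, (a i : ℤ) • g i
            = (∑ j, (b j : ℤ) • TZ j + (N : ℤ) • g i₀) + ∑ i, (c i : ℤ) • g i := by
          have hpt : ∀ i, (a i : ℤ) • g i
              = ((b (Sum.inl i) : ℤ) • g i
                  + (b (Sum.inr i) : ℤ) • (if g i ∈ τ then -(g i) else g i))
                + (if i = i₀ then (N : ℤ) • g i else 0)
                + (c i : ℤ) • g i := by
            intro i
            simp only [ha, hc]
            by_cases hi : g i ∈ τ <;> by_cases hii : i = i₀ <;>
              simp only [hi, ite_true, ite_false] <;>
              simp only [hii, ite_true, ite_false, Nat.cast_add, Nat.cast_zero, add_smul,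
                zero_smul, smul_neg, add_zero, zero_add] <;>
              abel
          rw [Finset.sum_congr rfl (fun i _ => hpt i), Finset.sum_add_distrib,
            Finset.sum_add_distrib, Finset.sum_add_distrib,
            Finset.sum_ite_eq' Finset.univ i₀ (fun i => (N : ℤ) • g i)]
          rw [Fintype.sum_sum_type]
          simp only [hTZ, Sum.elim_inl, Sum.elim_inr, Finset.mem_univ, if_true]
          try abel
        rw [hgoal, hZ]
        simp [smul_neg]
      have hcτ : (∑ i, c i • g i) ∈ τ := by
        apply AddSubmonoid.sum_mem
        intro i _
        by_cases hi : g i ∈ τ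
        · simp only [hc, hi, if_true]
          exact τ.nsmul_mem hi _
        · simpa [hc, hi] using zero_mem τ
      exact hi₀ (hface a (key ▸ hcτ) i₀ (by simp [ha]; omega))
    obtain ⟨u, hu, huy⟩ := farkas' _ _ hnot
    obtain ⟨N, hN, hbu⟩ := exists_int_scale u
    choose U hU using hbu
    have hcastU : castVec U = (N : ℚ) • u := by
      funext i
      simp [castVec, hU i]
    have hdot : ∀ x : L n, ((U ⬝ᵥ x : ℤ) : ℚ) = (N : ℚ) * (u ⬝ᵥ castVec x) := by
      intro x
      rw [castVec_dot, hcastU, smul_dotProduct, smul_eq_mul]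
    have hNpos : (0 : ℚ) < N := by exact_mod_cast hN
    refine ⟨U, ?_, ?_, ?_⟩
    · intro i
      have := hu (Sum.inl i)
      simp only [hTZ, Sum.elim_inl] at this
      have : (0 : ℚ) ≤ ((U ⬝ᵥ g i : ℤ) : ℚ) := by
        rw [hdot]
        exact mul_nonneg hNpos.le this
      exact_mod_cast this
    · intro i hi
      have h1 := hu (Sum.inl i)
      have h2 := hu (Sum.inr i)
      simp only [hTZ, Sum.elim_inl, Sum.elim_inr, hi, if_true, castVec_neg,
        dotProduct_neg] at h1 h2
      have h3 : u ⬝ᵥ castVec (g i) = 0 := le_antisymm (by linarith) h1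
      have : ((U ⬝ᵥ g i : ℤ) : ℚ) = 0 := by
        rw [hdot, h3, mul_zero]
      exact_mod_cast this
    · have h1 : (0 : ℚ) < u ⬝ᵥ castVec (g i₀) := by
        rw [dotProduct_neg] at huy
        linarith
      have : (0 : ℚ) < ((U ⬝ᵥ g i₀ : ℤ) : ℚ) := by
        rw [hdot]
        exact mul_pos hNpos h1
      exact_mod_cast this
  choose! uu h1 h2 h3 using step
  set s : Finset (Fin m) := Finset.univ.filter (fun i => g i ∉ τ) with hsdef
  refine ⟨∑ j ∈ s, uu j, ?_, ?_, ?_⟩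
  · intro i
    rw [sum_dot]
    apply Finset.sum_nonneg
    intro j hj
    exact h1 j (by simpa [hsdef] using hj) i
  · intro i hi
    rw [sum_dot]
    apply Finset.sum_eq_zero
    intro j hj
    exact h2 j (by simpa [hsdef] using hj) i hi
  · intro i hi
    rw [sum_dot]
    apply Finset.sum_pos'
    · intro j hj
      exact h1 j (by simpa [hsdef] using hj) i
    · exact ⟨i, by simp [hsdef, hi], h3 i hi⟩

lemma mem_closure_range {n m : ℕ} (g : Fin m → L n) (v : L n)
    (hv : v ∈ AddSubmonoid.closure (Set.range g)) :
    ∃ a : Fin m → ℕ, v = ∑ i, a i • g i := by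
  classical
  induction hv using AddSubmonoid.closure_induction with
  | mem x hx =>
      obtain ⟨i, rfl⟩ := hx
      refine ⟨fun j => if j = i then 1 else 0, ?_⟩
      simp [ite_smul, Finset.sum_ite_eq']
  | zero =>
      exact ⟨0, by simp⟩
  | add x y hx hy ihx ihy =>
      obtain ⟨a, rfl⟩ := ihx
      obtain ⟨b, rfl⟩ := ihy
      exact ⟨a + b, by simp [add_smul, Finset.sum_add_distrib]⟩

/-- dot product with a fixed vector, as a linear functional -/
def dotLin {n : ℕ} (U : L n) : L n →ₗ[ℤ] ℤ where
  toFun v := U ⬝ᵥ v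
  map_add' x y := dotProduct_add U x y
  map_smul' c x := dotProduct_smul c U x

lemma dot_sum {n : ℕ} {ι : Type} (s : Finset ι) (x : L n) (f : ι → L n) :
    x ⬝ᵥ (∑ j ∈ s, f j) = ∑ j ∈ s, x ⬝ᵥ f j := by
  simp only [dotProduct, Finset.sum_apply, Finset.mul_sum]
  exact Finset.sum_comm


/-- A submonoid `τ ≤ σ` of a toric monoid `σ` is a face if
and only if there is an integral linear functional `u` on the group
completion of `σ` taking non-negative values on `σ`, vanishing on `τ` and
strictly positive on `σ ∖ τ`. -/
theorem isFace_iff_functional {n : ℕ} (σ τ : AddSubmonoid (L n))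
    (hσ : IsToric σ) (hτσ : τ ≤ σ) :
    IsFace τ σ ↔
      ∃ u : (AddSubgroup.closure (σ : Set (L n))) →ₗ[ℤ] ℤ,
        (∀ v, ∀ hv : v ∈ σ, 0 ≤ u ⟨v, AddSubgroup.subset_closure hv⟩) ∧
        (∀ v, ∀ hv : v ∈ σ, v ∈ τ → u ⟨v, AddSubgroup.subset_closure hv⟩ = 0) ∧
        (∀ v, ∀ hv : v ∈ σ, v ∉ τ → 0 < u ⟨v, AddSubgroup.subset_closure hv⟩) := by
  classical
  constructor
  · intro hF
    obtain ⟨S, hS⟩ := hσ.fg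
    set m := S.card with hm
    set g : Fin m → L n := fun i => ((S.equivFin.symm i : L n)) with hg
    have hgS : ∀ i, (g i) ∈ (S : Set (L n)) := fun i => (S.equivFin.symm i).2
    have hrange : Set.range g = (S : Set (L n)) := by
      ext x
      constructor
      · rintro ⟨i, rfl⟩
        exact hgS i
      · intro hx
        exact ⟨S.equivFin ⟨x, hx⟩, by simp [hg]⟩
    have hgσ : ∀ i, g i ∈ σ := fun i => hS ▸ AddSubmonoid.subset_closure (hgS i)
    have hdecomp : ∀ v ∈ σ, ∃ a : Fin m → ℕ, v = ∑ i, a i • g i := by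
      intro v hv
      apply mem_closure_range g
      rw [hrange, hS]
      exact hv
    have hface : ∀ a : Fin m → ℕ, (∑ i, a i • g i) ∈ τ → ∀ i, 0 < a i → g i ∈ τ := by
      intro a hsum i hi
      have hsplit : ∑ j, a j • g j
          = g i + ((a i - 1) • g i + ∑ j ∈ Finset.univ.erase i, a j • g j) := by
        rw [← Finset.add_sum_erase Finset.univ (fun j => a j • g j) (Finset.mem_univ i),
          ← add_assoc]
        congr 1
        conv_lhs => rw [← Nat.succ_pred_eq_of_pos hi]
        rw [succ_nsmul]
        rw [add_comm]
        rfl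
      have hw : ((a i - 1) • g i + ∑ j ∈ Finset.univ.erase i, a j • g j) ∈ σ :=
        AddSubmonoid.add_mem σ (AddSubmonoid.nsmul_mem σ (hgσ i) _)
          (AddSubmonoid.sum_mem σ fun j _ => AddSubmonoid.nsmul_mem σ (hgσ j) _)
      exact (hF.2 (g i) _ (hgσ i) hw (hsplit ▸ hsum)).1
    obtain ⟨U, hU1, hU2, hU3⟩ := exists_int_functional g τ hface
    have cast1 : ∀ (d : Fin m → ℕ), ∑ i, d i • g i = ∑ i, (d i : ℤ) • g i :=
      fun d => Finset.sum_congr rfl (fun i _ => (Nat.cast_smul_eq_nsmul ℤ _ _).symm)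
    have dot_eval : ∀ (a : Fin m → ℕ),
        U ⬝ᵥ (∑ i, a i • g i) = ∑ i, (a i : ℤ) * (U ⬝ᵥ g i) := by
      intro a
      rw [cast1 a, dot_sum]
      exact Finset.sum_congr rfl (fun i _ => by
        rw [dotProduct_smul, smul_eq_mul])
    refine ⟨(dotLin U).comp (AddSubgroup.closure (σ : Set (L n))).subtype.toIntLinearMap,
      ?_, ?_, ?_⟩
    · intro v hv
      obtain ⟨a, rfl⟩ := hdecomp v hv
      show 0 ≤ U ⬝ᵥ (∑ i, a i • g i)
      rw [dot_eval]
      exact Finset.sum_nonneg fun i _ => mul_nonneg (Int.natCast_nonneg _) (hU1 i)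
    · intro v hv hvτ
      obtain ⟨a, rfl⟩ := hdecomp v hv
      show U ⬝ᵥ (∑ i, a i • g i) = 0
      rw [dot_eval]
      apply Finset.sum_eq_zero
      intro i _
      rcases Nat.eq_zero_or_pos (a i) with h0 | hpos
      · simp [h0]
      · rw [hU2 i (hface a hvτ i hpos), mul_zero]
    · intro v hv hvτ
      obtain ⟨a, rfl⟩ := hdecomp v hv
      show 0 < U ⬝ᵥ (∑ i, a i • g i)
      have hex : ∃ i, 0 < a i ∧ g i ∉ τ := by
        by_contra hcon
        push_neg at hcon
        apply hvτ
        apply AddSubmonoid.sum_mem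
        intro i _
        rcases Nat.eq_zero_or_pos (a i) with h0 | hpos
        · simpa [h0] using zero_mem τ
        · exact AddSubmonoid.nsmul_mem τ (hcon i hpos) _
      obtain ⟨i, hpos, hnot⟩ := hex
      rw [dot_eval]
      apply Finset.sum_pos'
      · intro j _
        exact mul_nonneg (Int.natCast_nonneg _) (hU1 j)
      · exact ⟨i, Finset.mem_univ i, mul_pos (by exact_mod_cast hpos) (hU3 i hnot)⟩
  · rintro ⟨u, hu0, huz, hup⟩
    refine ⟨hτσ, fun v w hv hw hvw => ?_⟩
    have hσv : v + w ∈ σ := AddSubmonoid.add_mem σ hv hw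
    have heq : (⟨v + w, AddSubgroup.subset_closure hσv⟩ :
        AddSubgroup.closure (σ : Set (L n)))
        = ⟨v, AddSubgroup.subset_closure hv⟩ + ⟨w, AddSubgroup.subset_closure hw⟩ := rfl
    have hz : u ⟨v, AddSubgroup.subset_closure hv⟩ + u ⟨w, AddSubgroup.subset_closure hw⟩
        = 0 := by
      rw [← map_add, ← heq]
      exact huz (v + w) hσv hvw
    have h1 := hu0 v hv
    have h2 := hu0 w hw
    constructor
    · by_contra hvτ
      have := hup v hv hvτ
      omega
    · by_contra hwτ
      have := hup w hw hwτ
      omega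


end Toric
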